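/- Let s be a complex number with Re(s) > 0 and let k > 2 be real. Then Z(s, x+y+k) = k^s · ₃F₂(−s/2, −s/2, 1/2; 1, 1; 4/k²). -/

import Mathlib

open MeasureTheory Real

/-- The Pochhammer symbol `(a)_n = a (a+1) ⋯ (a+n-1)` for a complex number `a`. -/
noncomputable def cpoch (a : ℂ) (n : ℕ) : ℂ := ∏ i ∈ Finset.range n, (a + i)

/-- The generalized hypergeometric series `₃F₂(a₁,a₂,a₃; b₁,b₂; z)`. -/
noncomputable def F32 (a₁ a₂ a₃ b₁ b₂ z : ℂ) : ℂ :=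
  ∑' n : ℕ, (cpoch a₁ n * cpoch a₂ n * cpoch a₃ n) / (cpoch b₁ n * cpoch b₂ n)
    * z ^ n / (n.factorial : ℂ)

/-- The Zeta Mahler function of `x + y + k`. -/
noncomputable def Zcl (s : ℂ) (k : ℝ) : ℂ :=
  (1 / (2 * (π : ℂ)) ^ 2) *
    ∫ θ₁ in (0 : ℝ)..(2 * π), ∫ θ₂ in (0 : ℝ)..(2 * π),
      ((‖Complex.exp (θ₁ * Complex.I) +
        Complex.exp (θ₂ * Complex.I) + (k : ℂ)‖ : ℂ)) ^ s

open scoped ENNReal NNReal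

lemma choose_sq_sum (m : ℕ) : ∑ j ∈ Finset.range (m+1), (m.choose j)^2 = (2*m).choose m := by
  have h := Nat.add_choose_eq m m m
  rw [Finset.Nat.sum_antidiagonal_eq_sum_range_succ (fun i j => m.choose i * m.choose j)] at h
  rw [two_mul, h]
  refine Finset.sum_congr rfl fun j hj => ?_
  rw [sq, Nat.choose_symm (Finset.mem_range_succ_iff.mp hj)]

lemma abs_cpow_branch (w : ℂ) (hw : 0 < w.re) (s : ℂ) :
    ((‖w‖ : ℂ)) ^ s = w ^ (s/2) * ((starRingEnd ℂ) w) ^ (s/2) := by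
  have hw0 : w ≠ 0 := fun h => by simp [h] at hw
  have harg : w.arg ≠ π := fun h => by
    rw [Complex.arg_eq_pi_iff] at h; linarith [h.1]
  have hcw : (starRingEnd ℂ) w ≠ 0 := by simpa using hw0
  have habs : (‖w‖ : ℂ) ≠ 0 := by simpa using norm_ne_zero_iff.mpr hw0
  rw [Complex.cpow_def_of_ne_zero hw0, Complex.cpow_def_of_ne_zero hcw,
    Complex.cpow_def_of_ne_zero habs, ← Complex.exp_add, ← add_mul,
    Complex.log_conj _ harg, Complex.add_conj, Complex.log_re]
  have : Complex.log ((‖w‖ : ℝ) : ℂ) = (Real.log (‖w‖) : ℂ) :=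
    Complex.ofReal_log (norm_nonneg w) ▸ rfl
  rw [this]
  congr 1
  push_cast
  ring

lemma integral_exp_int (p : ℤ) :
    ∫ θ in (0:ℝ)..(2*π), Complex.exp ((p:ℂ) * θ * Complex.I)
      = if p = 0 then (2*π : ℂ) else 0 := by
  rcases eq_or_ne p 0 with hp | hp
  · simp [hp, two_pi_pos.le]
  · have hc : (p:ℂ) * Complex.I ≠ 0 := by
      simp [Complex.I_ne_zero, Complex.ext_iff, hp]
    have h : ∀ θ : ℝ, (p:ℂ) * (θ:ℂ) * Complex.I = ((p:ℂ) * Complex.I) * θ := by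
      intro θ; ring
    simp only [h]
    rw [integral_exp_mul_complex hc]
    have : Complex.exp ((p:ℂ) * Complex.I * (2*π:ℝ)) = 1 := by
      have := Complex.exp_int_mul_two_pi_mul_I p
      rw [← this]; congr 1; push_cast; ring
    push_cast at this
    simp [this, hp]

-- iterated deriv of (1+z)^r on slit region
lemma iteratedDeriv_one_add_cpow (r : ℂ) (n : ℕ) :
    Set.EqOn (iteratedDeriv n (fun z : ℂ => (1 + z) ^ r))
      (fun z => (∏ i ∈ Finset.range n, (r - i)) * (1 + z) ^ (r - n))
      {z : ℂ | 1 + z ∈ Complex.slitPlane} := by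
  have hopen : IsOpen {z : ℂ | 1 + z ∈ Complex.slitPlane} :=
    Complex.isOpen_slitPlane.preimage (continuous_const.add continuous_id)
  induction n with
  | zero => intro z hz; simp
  | succ n ih =>
    intro z hz
    rw [iteratedDeriv_succ]
    have hev : iteratedDeriv n (fun z : ℂ => (1 + z) ^ r)
        =ᶠ[nhds z] (fun z => (∏ i ∈ Finset.range n, (r - i)) * (1 + z) ^ (r - n)) := by
      filter_upwards [hopen.mem_nhds hz] using ih
    rw [hev.deriv_eq]
    have hd : HasDerivAt (fun z : ℂ => (1 + z) ^ (r - n))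
        ((r - n) * (1 + z) ^ (r - n - 1) * 1) z :=
      HasDerivAt.cpow_const ((hasDerivAt_id z).const_add 1) hz
    rw [((hd.const_mul _).deriv)]
    rw [Finset.prod_range_succ]
    have : r - (n:ℂ) - 1 = r - ((n:ℕ)+1 : ℕ) := by push_cast; ring
    rw [this]
    ring

lemma hasSum_binomial (r z : ℂ) (hz : ‖z‖ < 1) :
    HasSum (fun n : ℕ => (∏ i ∈ Finset.range n, (r - i)) / n.factorial * z ^ n)
      ((1 + z) ^ r) := by
  have hmem : ∀ w : ℂ, ‖w‖ < 1 → 1 + w ∈ Complex.slitPlane := by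
    intro w hw
    refine Or.inl ?_
    have := Complex.abs_re_le_norm w
    simp only [Complex.add_re, Complex.one_re]
    have : |w.re| < 1 := lt_of_le_of_lt (Complex.abs_re_le_norm w) hw
    linarith [abs_lt.mp this |>.1]
  have hdiff : DifferentiableOn ℂ (fun z : ℂ => (1 + z) ^ r) (Metric.ball 0 1) := by
    intro w hw
    have hw1 : ‖w‖ < 1 := by simpa [Complex.dist_eq] using hw
    exact (((differentiableAt_const 1).add differentiableAt_id).cpow
      (differentiableAt_const r) (hmem w hw1)).differentiableWithinAt
  have hzb : z ∈ Metric.ball (0:ℂ) 1 := by simpa [Complex.dist_eq] using hz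
  have H := Complex.hasSum_taylorSeries_on_ball hdiff hzb
  convert H using 2 with n
  · rfl
  rw [iteratedDeriv_one_add_cpow r n (by simpa using hmem 0 (by simp))]
  simp [smul_eq_mul]
  ring

lemma integrand_expand (m n : ℕ) (θ₁ θ₂ : ℝ) :
    (Complex.exp (θ₁*Complex.I) + Complex.exp (θ₂*Complex.I))^m *
      ((starRingEnd ℂ) (Complex.exp (θ₁*Complex.I) + Complex.exp (θ₂*Complex.I)))^n
    = ∑ p ∈ Finset.range (m+1) ×ˢ Finset.range (n+1),
        (m.choose p.1 * n.choose p.2 : ℂ) *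
          (Complex.exp (((((p.1:ℤ) - (p.2:ℤ) : ℤ)):ℂ) * θ₁ * Complex.I) *
          Complex.exp (((((m-p.1 : ℕ):ℤ) - ((n-p.2 : ℕ):ℤ) : ℤ):ℂ) * θ₂ * Complex.I)) := by
  have hconj : (starRingEnd ℂ) (Complex.exp (θ₁*Complex.I) + Complex.exp (θ₂*Complex.I))
      = Complex.exp (-(θ₁*Complex.I)) + Complex.exp (-(θ₂*Complex.I)) := by
    simp [← Complex.exp_conj, map_mul, Complex.conj_I, Complex.conj_ofReal]
  rw [hconj, add_pow, add_pow, Finset.sum_mul_sum, ← Finset.sum_product']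
  refine Finset.sum_congr rfl fun p hp => ?_
  obtain ⟨h1, h2⟩ := Finset.mem_product.mp hp
  rw [Finset.mem_range] at h1 h2
  obtain ⟨j, j'⟩ := p
  simp only at h1 h2 ⊢
  have hstep :
      Complex.exp (θ₁*Complex.I) ^ j * Complex.exp (θ₂*Complex.I) ^ (m - j) * (m.choose j : ℂ) *
        (Complex.exp (-(θ₁*Complex.I)) ^ j' * Complex.exp (-(θ₂*Complex.I)) ^ (n - j') * (n.choose j' : ℂ))
      = (m.choose j * n.choose j' : ℂ) *
          ((Complex.exp ((j:ℂ)*(θ₁*Complex.I)) * Complex.exp ((j':ℂ)*(-(θ₁*Complex.I)))) *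
           (Complex.exp (((m-j:ℕ):ℂ)*(θ₂*Complex.I)) * Complex.exp (((n-j':ℕ):ℂ)*(-(θ₂*Complex.I))))) := by
    rw [Complex.exp_nat_mul, Complex.exp_nat_mul, Complex.exp_nat_mul, Complex.exp_nat_mul]
    ring
  rw [hstep, ← Complex.exp_add, ← Complex.exp_add]
  congr 2
  · push_cast
    ring
  · push_cast [Nat.cast_sub (Nat.lt_succ_iff.mp h1), Nat.cast_sub (Nat.lt_succ_iff.mp h2)]
    ring

lemma inner_orthog (m n : ℕ) (θ₁ : ℝ) :
    (∫ θ₂ in (0:ℝ)..(2*π),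
      (Complex.exp (θ₁*Complex.I) + Complex.exp (θ₂*Complex.I))^m *
        ((starRingEnd ℂ) (Complex.exp (θ₁*Complex.I) + Complex.exp (θ₂*Complex.I)))^n)
    = ∑ p ∈ Finset.range (m+1) ×ˢ Finset.range (n+1),
        (m.choose p.1 * n.choose p.2 : ℂ) *
          (Complex.exp (((((p.1:ℤ) - (p.2:ℤ) : ℤ)):ℂ) * θ₁ * Complex.I) *
          (if ((m-p.1 : ℕ):ℤ) - ((n-p.2 : ℕ):ℤ) = 0 then (2*π:ℂ) else 0)) := by
  rw [intervalIntegral.integral_congr (fun θ₂ _ => integrand_expand m n θ₁ θ₂)]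
  rw [intervalIntegral.integral_finset_sum]
  · refine Finset.sum_congr rfl fun p hp => ?_
    rw [intervalIntegral.integral_const_mul, intervalIntegral.integral_const_mul,
      integral_exp_int]
  · intro p hp
    apply Continuous.intervalIntegrable
    fun_prop

lemma orthog (m n : ℕ) :
    (∫ θ₁ in (0:ℝ)..(2*π), ∫ θ₂ in (0:ℝ)..(2*π),
      (Complex.exp (θ₁*Complex.I) + Complex.exp (θ₂*Complex.I))^m *
        ((starRingEnd ℂ) (Complex.exp (θ₁*Complex.I) + Complex.exp (θ₂*Complex.I)))^n)
    = if m = n then (2*π:ℂ)^2 * ((2*m).choose m : ℂ) else 0 := by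
  rw [intervalIntegral.integral_congr (fun θ₁ _ => inner_orthog m n θ₁)]
  rw [intervalIntegral.integral_finset_sum (fun p hp => by
    apply Continuous.intervalIntegrable; fun_prop)]
  have hterm : ∀ p ∈ Finset.range (m+1) ×ˢ Finset.range (n+1),
      (∫ θ₁ in (0:ℝ)..(2*π), (m.choose p.1 * n.choose p.2 : ℂ) *
          (Complex.exp (((((p.1:ℤ) - (p.2:ℤ) : ℤ)):ℂ) * θ₁ * Complex.I) *
          (if ((m-p.1 : ℕ):ℤ) - ((n-p.2 : ℕ):ℤ) = 0 then (2*π:ℂ) else 0)))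
      = (m.choose p.1 * n.choose p.2 : ℂ) *
          ((if ((p.1:ℤ) - (p.2:ℤ)) = 0 then (2*π:ℂ) else 0) *
          (if ((m-p.1 : ℕ):ℤ) - ((n-p.2 : ℕ):ℤ) = 0 then (2*π:ℂ) else 0)) := by
    intro p hp
    rw [intervalIntegral.integral_const_mul]
    congr 1
    rw [intervalIntegral.integral_mul_const, integral_exp_int]
  rw [Finset.sum_congr rfl hterm]
  rcases eq_or_ne m n with hmn | hmn
  · subst hmn
    rw [Finset.sum_product]
    have hdiag : ∀ j ∈ Finset.range (m+1),
        (∑ j' ∈ Finset.range (m+1), (m.choose j * m.choose j' : ℂ) *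
          ((if ((j:ℤ) - (j':ℤ)) = 0 then (2*π:ℂ) else 0) *
          (if ((m-j : ℕ):ℤ) - ((m-j' : ℕ):ℤ) = 0 then (2*π:ℂ) else 0)))
        = (m.choose j : ℂ)^2 * (2*π:ℂ)^2 := by
      intro j hj
      rw [Finset.sum_eq_single j]
      · simp [sq]
      · intro j' _ hne
        have : ¬ ((j:ℤ) - (j':ℤ) = 0) := by omega
        simp [this]
      · intro h; exact absurd hj h
    rw [Finset.sum_congr rfl hdiag, ← Finset.sum_mul, if_pos rfl, ← choose_sq_sum m]
    push_cast
    ring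
  · simp only [if_neg hmn]
    refine Finset.sum_eq_zero fun p hp => ?_
    obtain ⟨h1, h2⟩ := Finset.mem_product.mp hp
    rw [Finset.mem_range] at h1 h2
    rcases eq_or_ne ((p.1:ℤ) - (p.2:ℤ)) 0 with h | h
    · have : ¬ (((m-p.1 : ℕ):ℤ) - ((n-p.2 : ℕ):ℤ) = 0) := by
        push_cast [Nat.cast_sub (Nat.lt_succ_iff.mp h1), Nat.cast_sub (Nat.lt_succ_iff.mp h2)]
        omega
      simp [this]
    · simp [h]


noncomputable def ccoef (s : ℂ) (k : ℝ) (n : ℕ) : ℂ :=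
  (∏ i ∈ Finset.range n, (s/2 - i)) / n.factorial * ((k:ℂ))⁻¹ ^ n

lemma ccoef_succ (s : ℂ) (k : ℝ) (n : ℕ) :
    ccoef s k (n+1) = ccoef s k n * ((s/2 - n) / (n+1) * (k:ℂ)⁻¹) := by
  simp only [ccoef, Finset.prod_range_succ, Nat.factorial_succ, pow_succ]
  push_cast
  field_simp

lemma summable_ccoef (s : ℂ) (k : ℝ) (hk : 2 < k) :
    Summable (fun n => ‖ccoef s k n‖ * 2^n) := by
  have hk0 : (0:ℝ) < k := by linarith
  set A : ℝ := ‖s/2‖ with hA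
  set r : ℝ := (2/k + 1)/2 with hr
  have h2k : 2/k < 1 := by rw [div_lt_one hk0]; linarith
  have hr1 : r < 1 := by rw [hr]; linarith
  apply summable_of_ratio_norm_eventually_le hr1
  -- tendsto of the ratio bound
  have htend : Filter.Tendsto (fun n : ℕ => 2/k * (1 + (A - 1) / ((n:ℝ)+1)))
      Filter.atTop (nhds (2/k)) := by
    have h0 : Filter.Tendsto (fun n : ℕ => (A - 1) / ((n:ℝ)+1)) Filter.atTop (nhds 0) := by
      have := Filter.Tendsto.comp (tendsto_const_div_atTop_nhds_zero_nat (A-1))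
        (Filter.tendsto_add_atTop_nat 1)
      convert this using 2 with n
      push_cast [Function.comp]
      norm_num
    have := ((tendsto_const_nhds (x := (1:ℝ))).add h0).const_mul (2/k)
    simpa using this
  have hev : ∀ᶠ n : ℕ in Filter.atTop, 2/k * (1 + (A - 1) / ((n:ℝ)+1)) < r :=
    htend.eventually_lt_const (by rw [hr]; linarith)
  filter_upwards [hev] with n hn
  have habsn : ‖(n:ℂ)+1‖ = (n:ℝ)+1 := by
    rw [show ((n:ℂ)+1) = ((n+1:ℕ):ℂ) by push_cast; ring, Complex.norm_natCast]
    push_cast; ring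
  have hcalc : ‖ccoef s k (n+1)‖ * 2^(n+1)
      = (‖ccoef s k n‖ * 2^n) * (‖s/2 - n‖ * 2 / (((n:ℝ)+1) * k)) := by
    rw [ccoef_succ]
    simp only [norm_mul, norm_div, norm_inv, Complex.norm_real, Real.norm_eq_abs, habsn, abs_of_pos hk0,
      pow_succ]
    field_simp
  have hQ : ‖s/2 - n‖ * 2 / (((n:ℝ)+1) * k) ≤ 2/k * (1 + (A - 1) / ((n:ℝ)+1)) := by
    have h1 : ‖s/2 - n‖ ≤ A + n := by
      have := norm_add_le (s/2) (-(n:ℂ))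
      simpa [sub_eq_add_neg, hA] using this
    have h2 : 2/k * (1 + (A - 1) / ((n:ℝ)+1)) = (A + n) * 2 / (((n:ℝ)+1) * k) := by
      have hn1 : ((n:ℝ)+1) ≠ 0 := by positivity
      field_simp
      ring
    rw [h2]
    gcongr
  have hnn : (0:ℝ) ≤ ‖ccoef s k n‖ * 2^n := by positivity
  rw [Real.norm_eq_abs, Real.norm_eq_abs, abs_of_nonneg (by positivity),
    abs_of_nonneg hnn, hcalc]
  calc (‖ccoef s k n‖ * 2^n) * (‖s/2 - n‖ * 2 / (((n:ℝ)+1) * k))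
      ≤ (‖ccoef s k n‖ * 2^n) * r :=
        mul_le_mul_of_nonneg_left (hQ.trans hn.le) hnn
    _ = r * (‖ccoef s k n‖ * 2^n) := mul_comm _ _

lemma interval_integral_tsum {ι : Type*} [Countable ι] (F : ι → ℝ → ℂ)
    (hF : ∀ i, Continuous (F i)) (B : ι → ℝ) (hB : ∀ i θ, ‖F i θ‖ ≤ B i)
    (hsB : Summable B) :
    ∫ θ in (0:ℝ)..(2*π), ∑' i, F i θ = ∑' i, ∫ θ in (0:ℝ)..(2*π), F i θ := by
  have h2π : (0:ℝ) ≤ 2*π := by positivity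
  simp only [intervalIntegral.integral_of_le h2π]
  rw [MeasureTheory.integral_tsum (fun i => (hF i).aestronglyMeasurable.restrict)]
  rw [← lt_top_iff_ne_top]
  calc ∑' i, ∫⁻ a in Set.Ioc (0:ℝ) (2*π), ‖F i a‖₊
      ≤ ∑' i, ((B i).toNNReal : ℝ≥0∞) * volume (Set.Ioc (0:ℝ) (2*π)) := by
        refine ENNReal.tsum_le_tsum fun i => ?_
        rw [← MeasureTheory.setLIntegral_const]
        refine MeasureTheory.lintegral_mono fun a => ?_
        have h1 : ‖F i a‖₊ ≤ (B i).toNNReal := by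
          rw [← Real.toNNReal_coe (r := ‖F i a‖₊)]
          exact Real.toNNReal_mono (by simpa using hB i a)
        exact ENNReal.coe_le_coe.mpr h1
    _ = (∑' i, ((B i).toNNReal : ℝ≥0∞)) * volume (Set.Ioc (0:ℝ) (2*π)) :=
        ENNReal.tsum_mul_right
    _ < ⊤ := by
        apply ENNReal.mul_lt_top
        · rw [lt_top_iff_ne_top, ENNReal.tsum_coe_ne_top_iff_summable]
          exact hsB.toNNReal
        · exact measure_Ioc_lt_top

-- single binomial expansion adapted to ccoef
lemma hasSum_ccoef (s : ℂ) (k : ℝ) (hk : 2 < k) (u : ℂ) (hu : ‖u‖ ≤ 2) :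
    HasSum (fun n : ℕ => ccoef s k n * u ^ n) ((1 + u / k) ^ (s/2)) := by
  have hk0 : (0:ℝ) < k := by linarith
  have hz : ‖u / k‖ < 1 := by
    rw [norm_div, Complex.norm_real, Real.norm_eq_abs, abs_of_pos hk0, div_lt_one hk0]
    linarith
  have H := hasSum_binomial (s/2) (u / k) hz
  convert H using 2 with n
  rw [div_pow, div_eq_mul_inv (u^n), ← inv_pow]
  simp only [ccoef]
  push_cast
  ring

lemma norm_ccoef_mul_le (s : ℂ) (k : ℝ) (u : ℂ) (hu : ‖u‖ ≤ 2) (n : ℕ) :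
    ‖ccoef s k n * u ^ n‖ ≤ ‖ccoef s k n‖ * 2^n := by
  rw [norm_mul, norm_pow]
  exact mul_le_mul_of_nonneg_left (pow_le_pow_left₀ (norm_nonneg u) hu n) (norm_nonneg _)

lemma pointwise_hasSum (s : ℂ) (k : ℝ) (hk : 2 < k) (u : ℂ) (hu : ‖u‖ ≤ 2) :
    HasSum (fun p : ℕ × ℕ => (k:ℂ)^s *
        ((ccoef s k p.1 * u ^ p.1) * (ccoef s k p.2 * ((starRingEnd ℂ) u) ^ p.2)))
      (((‖u + (k:ℂ)‖ : ℂ)) ^ s) := by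
  have hk0 : (0:ℝ) < k := by linarith
  have hkc : (k:ℂ) ≠ 0 := by exact_mod_cast hk0.ne'
  have hcu : ‖(starRingEnd ℂ) u‖ ≤ 2 := by rwa [Complex.norm_conj]
  have S1 := hasSum_ccoef s k hk u hu
  have S2 := hasSum_ccoef s k hk ((starRingEnd ℂ) u) hcu
  have hsum : Summable (fun p : ℕ × ℕ =>
      (ccoef s k p.1 * u ^ p.1) * (ccoef s k p.2 * ((starRingEnd ℂ) u) ^ p.2)) := by
    apply Summable.of_norm
    have hB := (summable_ccoef s k hk).mul_of_nonneg (summable_ccoef s k hk)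
      (fun n => by positivity) (fun n => by positivity)
    refine hB.of_nonneg_of_le (fun p => norm_nonneg _) (fun p => ?_)
    rw [norm_mul]
    exact mul_le_mul (norm_ccoef_mul_le s k u hu p.1) (norm_ccoef_mul_le s k _ hcu p.2)
      (norm_nonneg _) (by positivity)
  have Hprod := (S1.mul S2 hsum).mul_left ((k:ℂ)^s)
  convert Hprod using 1
  · rfl
  -- value identity
  have hval : u + (k:ℂ) = (k:ℂ) * (1 + u / k) := by field_simp; ring
  have habs : ‖u + (k:ℂ)‖ = k * ‖1 + u / k‖ := by
    rw [hval, norm_mul, Complex.norm_real, Real.norm_eq_abs, abs_of_pos hk0]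
  rw [habs, Complex.ofReal_mul, Complex.mul_cpow_ofReal_nonneg hk0.le (norm_nonneg _)]
  congr 1
  have hre : 0 < (1 + u / k).re := by
    have h1 : |(u / k).re| ≤ ‖u / k‖ := Complex.abs_re_le_norm _
    have h2 : ‖u / k‖ < 1 := by
      rw [norm_div, Complex.norm_real, Real.norm_eq_abs, abs_of_pos hk0, div_lt_one hk0]; linarith
    have := abs_lt.mp (lt_of_le_of_lt h1 h2) |>.1
    simp only [Complex.add_re, Complex.one_re]
    linarith
  rw [abs_cpow_branch _ hre]
  congr 2
  simp [map_div₀, Complex.conj_ofReal]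

lemma cpoch_one (m : ℕ) : cpoch 1 m = (m.factorial : ℂ) := by
  induction m with
  | zero => simp [cpoch]
  | succ m ih =>
    rw [cpoch, Finset.prod_range_succ, ← cpoch, ih, Nat.factorial_succ]
    push_cast
    ring

lemma cpoch_half (m : ℕ) :
    (4:ℂ)^m * (m.factorial : ℂ) * cpoch (1/2) m = ((2*m).factorial : ℂ) := by
  induction m with
  | zero => simp [cpoch]
  | succ m ih =>
    rw [cpoch, Finset.prod_range_succ, ← cpoch]
    have h1 : (2*(m+1)).factorial = (2*m+2) * ((2*m+1) * (2*m).factorial) := by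
      rw [show 2*(m+1) = (2*m+1)+1 by ring, Nat.factorial_succ, Nat.factorial_succ]
    rw [h1, Nat.factorial_succ]
    push_cast
    linear_combination (4*((m:ℂ)+1)*(1/2+(m:ℂ))) * ih

lemma prod_neg_cpoch (s : ℂ) (m : ℕ) :
    (∏ i ∈ Finset.range m, (s/2 - i)) = (-1)^m * cpoch (-(s/2)) m := by
  induction m with
  | zero => simp [cpoch]
  | succ m ih =>
    rw [Finset.prod_range_succ, cpoch, Finset.prod_range_succ, ← cpoch, ih]
    ring

lemma choose_central_cast (m : ℕ) :
    (((2*m).choose m : ℕ) : ℂ) * (m.factorial : ℂ) * (m.factorial : ℂ)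
      = ((2*m).factorial : ℂ) := by
  have := Nat.choose_mul_factorial_mul_factorial (Nat.le_mul_of_pos_left m (by norm_num) : m ≤ 2*m)
  have h2 : 2*m - m = m := by omega
  rw [h2] at this
  exact_mod_cast congrArg (Nat.cast : ℕ → ℂ) this

lemma term_id (s : ℂ) (k : ℝ) (hk : 2 < k) (m : ℕ) :
    (cpoch (-(s/2)) m * cpoch (-(s/2)) m * cpoch (1/2) m) / (cpoch 1 m * cpoch 1 m)
      * (4/(k:ℂ)^2)^m / m.factorial
    = (ccoef s k m * ccoef s k m) * (((2*m).choose m : ℕ) : ℂ) := by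
  have hk0 : (k:ℂ) ≠ 0 := by
    exact_mod_cast (by linarith : (0:ℝ) < k).ne'
  have hF : (m.factorial : ℂ) ≠ 0 := by exact_mod_cast m.factorial_ne_zero
  have h4 : (4:ℂ)^m ≠ 0 := by norm_num
  have hKm : (k:ℂ)^m ≠ 0 := pow_ne_zero _ hk0
  have hT : ((2*m).factorial : ℂ) ≠ 0 := by exact_mod_cast (2*m).factorial_ne_zero
  have hH : cpoch (1/2) m = ((2*m).factorial : ℂ)/((4:ℂ)^m * (m.factorial:ℂ)) := by
    rw [eq_div_iff (by exact mul_ne_zero h4 hF)]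
    linear_combination cpoch_half m
  have hC : (((2*m).choose m : ℕ):ℂ)
      = ((2*m).factorial : ℂ)/((m.factorial:ℂ) * (m.factorial:ℂ)) := by
    rw [eq_div_iff (by exact mul_ne_zero hF hF)]
    linear_combination choose_central_cast m
  have hPP : (∏ i ∈ Finset.range m, (s/2 - i)) * (∏ i ∈ Finset.range m, (s/2 - i))
      = cpoch (-(s/2)) m * cpoch (-(s/2)) m := by
    rw [prod_neg_cpoch]
    have hsq : ((-1:ℂ))^m * (-1)^m = 1 := by
      rw [← pow_add, ← two_mul, pow_mul]
      norm_num
    calc ((-1:ℂ))^m * cpoch (-(s/2)) m * ((-1)^m * cpoch (-(s/2)) m)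
        = ((-1:ℂ))^m * (-1)^m * (cpoch (-(s/2)) m * cpoch (-(s/2)) m) := by ring
      _ = cpoch (-(s/2)) m * cpoch (-(s/2)) m := by rw [hsq, one_mul]
  have hcc : ccoef s k m * ccoef s k m
      = (cpoch (-(s/2)) m * cpoch (-(s/2)) m) / ((m.factorial:ℂ) * (m.factorial:ℂ))
          * ((k:ℂ)^m * (k:ℂ)^m)⁻¹ := by
    rw [← hPP, ccoef, inv_pow]
    ring
  have hHB : (4:ℂ)^m * cpoch (1/2) m = ((2*m).factorial : ℂ)/(m.factorial:ℂ) := by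
    rw [eq_div_iff hF]
    linear_combination cpoch_half m
  rw [hcc, cpoch_one, hC]
  calc (cpoch (-(s/2)) m * cpoch (-(s/2)) m * cpoch (1/2) m) /
        ((m.factorial:ℂ) * (m.factorial:ℂ)) * (4/(k:ℂ)^2)^m / (m.factorial:ℂ)
      = (cpoch (-(s/2)) m * cpoch (-(s/2)) m) * ((4:ℂ)^m * cpoch (1/2) m) /
          ((m.factorial:ℂ) * (m.factorial:ℂ) * (m.factorial:ℂ)) *
          ((k:ℂ)^m * (k:ℂ)^m)⁻¹ := by
        rw [div_pow, show ((k:ℂ)^2)^m = (k:ℂ)^m * (k:ℂ)^m from by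
          rw [← pow_mul, two_mul, pow_add]]
        ring
    _ = (cpoch (-(s/2)) m * cpoch (-(s/2)) m) * (((2*m).factorial : ℂ)/(m.factorial:ℂ)) /
          ((m.factorial:ℂ) * (m.factorial:ℂ) * (m.factorial:ℂ)) *
          ((k:ℂ)^m * (k:ℂ)^m)⁻¹ := by rw [hHB]
    _ = cpoch (-(s/2)) m * cpoch (-(s/2)) m / ((m.factorial:ℂ) * (m.factorial:ℂ)) *
          ((k:ℂ)^m * (k:ℂ)^m)⁻¹ *
          (((2*m).factorial : ℂ) / ((m.factorial:ℂ) * (m.factorial:ℂ))) := by ring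

lemma abs_u_le (θ₁ θ₂ : ℝ) :
    ‖Complex.exp (θ₁*Complex.I) + Complex.exp (θ₂*Complex.I)‖ ≤ 2 := by
  refine (norm_add_le _ _).trans ?_
  rw [Complex.norm_exp_ofReal_mul_I, Complex.norm_exp_ofReal_mul_I]
  norm_num

lemma hinner (s : ℂ) (k : ℝ) (hk : 2 < k) (θ₁ : ℝ) :
      (∫ θ₂ in (0:ℝ)..(2*π), ((‖(Complex.exp (θ₁*Complex.I) + Complex.exp (θ₂*Complex.I)) + (k:ℂ)‖ : ℂ)) ^ s)
      = ∑' p : ℕ × ℕ, ((k:ℂ)^s * (ccoef s k p.1 * ccoef s k p.2)) *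
          ∫ θ₂ in (0:ℝ)..(2*π),
            (Complex.exp (θ₁*Complex.I) + Complex.exp (θ₂*Complex.I))^p.1 *
              ((starRingEnd ℂ) (Complex.exp (θ₁*Complex.I) + Complex.exp (θ₂*Complex.I)))^p.2 := by
  set u : ℝ → ℂ := fun θ₂ => Complex.exp (θ₁*Complex.I) + Complex.exp (θ₂*Complex.I) with hu
  have hSb := summable_ccoef s k hk
  have hSbprod := hSb.mul_of_nonneg hSb (fun n => by positivity) (fun n => by positivity)
  have hu_c : Continuous u := by rw [hu]; fun_prop
  have habs2 : ∀ θ₂ : ℝ, ‖u θ₂‖ ≤ 2 := by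
    intro θ₂; rw [hu]; exact abs_u_le θ₁ θ₂
  have h1 : ∀ θ₂ : ℝ, ((‖u θ₂ + (k:ℂ)‖ : ℂ)) ^ s
      = ∑' p : ℕ × ℕ, (k:ℂ)^s *
          ((ccoef s k p.1 * (u θ₂) ^ p.1) *
           (ccoef s k p.2 * ((starRingEnd ℂ) (u θ₂)) ^ p.2)) :=
    fun θ₂ => (pointwise_hasSum s k hk _ (habs2 θ₂)).tsum_eq.symm
  have hcont : ∀ p : ℕ × ℕ, Continuous (fun θ₂ : ℝ => (k:ℂ)^s *
      ((ccoef s k p.1 * (u θ₂) ^ p.1) *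
       (ccoef s k p.2 * ((starRingEnd ℂ) (u θ₂)) ^ p.2))) := by
    intro p
    exact continuous_const.mul ((continuous_const.mul (hu_c.pow _)).mul
      (continuous_const.mul ((Complex.continuous_conj.comp hu_c).pow _)))
  have hbnd : ∀ (p : ℕ × ℕ) (θ₂ : ℝ), ‖(k:ℂ)^s *
      ((ccoef s k p.1 * (u θ₂) ^ p.1) *
       (ccoef s k p.2 * ((starRingEnd ℂ) (u θ₂)) ^ p.2))‖
      ≤ ‖(k:ℂ)^s‖ *
        ((‖ccoef s k p.1‖ * 2^p.1) * (‖ccoef s k p.2‖ * 2^p.2)) := by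
    intro p θ₂
    simp only [norm_mul, norm_pow]
    gcongr
    · exact habs2 θ₂
    · rw [Complex.norm_conj]; exact habs2 θ₂
  have hswap := interval_integral_tsum
    (fun (p : ℕ × ℕ) (θ₂ : ℝ) => (k:ℂ)^s *
      ((ccoef s k p.1 * (u θ₂) ^ p.1) *
       (ccoef s k p.2 * ((starRingEnd ℂ) (u θ₂)) ^ p.2)))
    hcont _ hbnd (hSbprod.mul_left (‖(k:ℂ)^s‖))
  calc (∫ θ₂ in (0:ℝ)..(2*π), ((‖u θ₂ + (k:ℂ)‖ : ℂ)) ^ s)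
      = ∫ θ₂ in (0:ℝ)..(2*π), ∑' p : ℕ × ℕ, (k:ℂ)^s *
          ((ccoef s k p.1 * (u θ₂) ^ p.1) *
           (ccoef s k p.2 * ((starRingEnd ℂ) (u θ₂)) ^ p.2)) :=
        intervalIntegral.integral_congr (fun θ₂ _ => h1 θ₂)
    _ = ∑' p : ℕ × ℕ, ∫ θ₂ in (0:ℝ)..(2*π), (k:ℂ)^s *
          ((ccoef s k p.1 * (u θ₂) ^ p.1) *
           (ccoef s k p.2 * ((starRingEnd ℂ) (u θ₂)) ^ p.2)) := hswap
    _ = ∑' p : ℕ × ℕ, ((k:ℂ)^s * (ccoef s k p.1 * ccoef s k p.2)) *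
          ∫ θ₂ in (0:ℝ)..(2*π), (u θ₂)^p.1 * ((starRingEnd ℂ) (u θ₂))^p.2 := by
        refine tsum_congr fun p => ?_
        rw [← intervalIntegral.integral_const_mul]
        refine intervalIntegral.integral_congr fun θ₂ _ => ?_
        ring


set_option maxHeartbeats 1000000 in
theorem Z_xyk_eq_of_two_lt (s : ℂ) (hs : 0 < s.re) (k : ℝ) (hk : 2 < k) :
    Zcl s k = (k : ℂ) ^ s * F32 (-(s / 2)) (-(s / 2)) (1/2) 1 1 (4 / (k : ℂ) ^ 2) := by
  have hπ : (0:ℝ) < π := pi_pos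
  have hSb := summable_ccoef s k hk
  have hSbprod := hSb.mul_of_nonneg hSb (fun n => by positivity) (fun n => by positivity)
  set E : ℕ × ℕ → ℝ → ℂ := fun p θ₁ => ∫ θ₂ in (0:ℝ)..(2*π),
      (Complex.exp (θ₁*Complex.I) + Complex.exp (θ₂*Complex.I))^p.1 *
        ((starRingEnd ℂ) (Complex.exp (θ₁*Complex.I) + Complex.exp (θ₂*Complex.I)))^p.2
    with hE
  have hEcont : ∀ p : ℕ × ℕ, Continuous (E p) := by
    intro p
    rw [hE]
    simp only
    have : (fun θ₁ : ℝ => ∫ θ₂ in (0:ℝ)..(2*π),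
        (Complex.exp (θ₁*Complex.I) + Complex.exp (θ₂*Complex.I))^p.1 *
          ((starRingEnd ℂ) (Complex.exp (θ₁*Complex.I) + Complex.exp (θ₂*Complex.I)))^p.2)
        = fun θ₁ : ℝ => ∑ q ∈ Finset.range (p.1+1) ×ˢ Finset.range (p.2+1),
          (p.1.choose q.1 * p.2.choose q.2 : ℂ) *
            (Complex.exp (((((q.1:ℤ) - (q.2:ℤ) : ℤ)):ℂ) * θ₁ * Complex.I) *
            (if ((p.1-q.1 : ℕ):ℤ) - ((p.2-q.2 : ℕ):ℤ) = 0 then (2*π:ℂ) else 0)) :=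
      funext fun θ₁ => inner_orthog p.1 p.2 θ₁
    rw [this]
    apply continuous_finset_sum
    intro q _
    fun_prop
  have hEbnd : ∀ (p : ℕ × ℕ) (θ₁ : ℝ), ‖E p θ₁‖ ≤ (2*π) * (2^p.1 * 2^p.2) := by
    intro p θ₁
    rw [hE]
    simp only
    refine le_trans (intervalIntegral.norm_integral_le_of_norm_le_const
      (C := 2^p.1 * 2^p.2) ?_) ?_
    · intro θ₂ _
      rw [norm_mul, norm_pow, norm_pow]
      gcongr
      · exact abs_u_le θ₁ θ₂
      · rw [Complex.norm_conj]; exact abs_u_le θ₁ θ₂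
    · rw [sub_zero, abs_of_pos (by positivity : (0:ℝ) < 2*π)]
      exact le_of_eq (mul_comm _ _)
  have hFbnd : ∀ (p : ℕ × ℕ) (θ₁ : ℝ),
      ‖((k:ℂ)^s * (ccoef s k p.1 * ccoef s k p.2)) * E p θ₁‖
      ≤ (‖(k:ℂ)^s‖ * (2*π)) *
        ((‖ccoef s k p.1‖ * 2^p.1) * (‖ccoef s k p.2‖ * 2^p.2)) := by
    intro p θ₁
    rw [norm_mul]
    calc ‖(k:ℂ)^s * (ccoef s k p.1 * ccoef s k p.2)‖ * ‖E p θ₁‖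
        ≤ ‖(k:ℂ)^s * (ccoef s k p.1 * ccoef s k p.2)‖ * ((2*π) * (2^p.1 * 2^p.2)) := by
          gcongr
          exact hEbnd p θ₁
      _ = (‖(k:ℂ)^s‖ * (2*π)) *
          ((‖ccoef s k p.1‖ * 2^p.1) * (‖ccoef s k p.2‖ * 2^p.2)) := by
          simp only [norm_mul]
          ring
  have hswap := interval_integral_tsum
    (fun (p : ℕ × ℕ) (θ₁ : ℝ) => ((k:ℂ)^s * (ccoef s k p.1 * ccoef s k p.2)) * E p θ₁)
    (fun p => continuous_const.mul (hEcont p)) _ hFbnd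
    ((hSbprod.mul_left (‖(k:ℂ)^s‖ * (2*π))))
  have houter :
      (∫ θ₁ in (0:ℝ)..(2*π), ∫ θ₂ in (0:ℝ)..(2*π),
        ((‖Complex.exp (θ₁ * Complex.I) +
          Complex.exp (θ₂ * Complex.I) + (k : ℂ)‖ : ℂ)) ^ s)
      = ∑' p : ℕ × ℕ, ((k:ℂ)^s * (ccoef s k p.1 * ccoef s k p.2)) *
          (if p.1 = p.2 then (2*π:ℂ)^2 * ((2*p.1).choose p.1 : ℂ) else 0) := by
    calc (∫ θ₁ in (0:ℝ)..(2*π), ∫ θ₂ in (0:ℝ)..(2*π),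
        ((‖Complex.exp (θ₁ * Complex.I) +
          Complex.exp (θ₂ * Complex.I) + (k : ℂ)‖ : ℂ)) ^ s)
        = ∫ θ₁ in (0:ℝ)..(2*π), ∑' p : ℕ × ℕ,
            ((k:ℂ)^s * (ccoef s k p.1 * ccoef s k p.2)) * E p θ₁ :=
          intervalIntegral.integral_congr (fun θ₁ _ => hinner s k hk θ₁)
      _ = ∑' p : ℕ × ℕ, ∫ θ₁ in (0:ℝ)..(2*π),
            ((k:ℂ)^s * (ccoef s k p.1 * ccoef s k p.2)) * E p θ₁ := hswap
      _ = ∑' p : ℕ × ℕ, ((k:ℂ)^s * (ccoef s k p.1 * ccoef s k p.2)) *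
            (if p.1 = p.2 then (2*π:ℂ)^2 * ((2*p.1).choose p.1 : ℂ) else 0) := by
          refine tsum_congr fun p => ?_
          rw [intervalIntegral.integral_const_mul]
          congr 1
          rw [hE]
          exact orthog p.1 p.2
  have hdiag : (∑' p : ℕ × ℕ, ((k:ℂ)^s * (ccoef s k p.1 * ccoef s k p.2)) *
          (if p.1 = p.2 then (2*π:ℂ)^2 * ((2*p.1).choose p.1 : ℂ) else 0))
      = ∑' m : ℕ, ((k:ℂ)^s * (ccoef s k m * ccoef s k m)) *
          ((2*π:ℂ)^2 * ((2*m).choose m : ℂ)) := by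
    refine tsum_eq_tsum_of_ne_zero_bij (fun m => (m.1, m.1)) ?_ ?_ ?_
    · intro a b hab
      exact Subtype.ext (congrArg Prod.fst hab)
    · intro p hp
      have hp12 : p.1 = p.2 := by
        by_contra h
        simp [h] at hp
      refine ⟨⟨p.1, ?_⟩, ?_⟩
      · simpa [← hp12] using hp
      · simp [Prod.ext_iff, hp12]
    · intro m
      simp
  have hπc : ((π:ℝ):ℂ) ≠ 0 := by exact_mod_cast hπ.ne'
  rw [Zcl, houter, hdiag]
  have hpull : (∑' m : ℕ, ((k:ℂ)^s * (ccoef s k m * ccoef s k m)) *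
          ((2*π:ℂ)^2 * ((2*m).choose m : ℂ)))
      = (2*(π:ℂ))^2 * ((k:ℂ)^s * ∑' m : ℕ, (ccoef s k m * ccoef s k m) *
          (((2*m).choose m : ℕ) : ℂ)) := by
    rw [← tsum_mul_left, ← tsum_mul_left]
    refine tsum_congr fun m => ?_
    push_cast
    ring
  rw [hpull, F32]
  rw [show (∑' m : ℕ, (cpoch (-(s/2)) m * cpoch (-(s/2)) m * cpoch (1/2) m) /
        (cpoch 1 m * cpoch 1 m) * (4/(k:ℂ)^2)^m / m.factorial)
      = ∑' m : ℕ, (ccoef s k m * ccoef s k m) * (((2*m).choose m : ℕ) : ℂ) from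
    tsum_congr fun m => term_id s k hk m]
  have h2π : (2*(π:ℂ))^2 ≠ 0 := by
    apply pow_ne_zero
    simp [hπc]
  field_simp
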